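/- Under the refined condition ‖y_{k+1} − (x̃_k − λ_{k+1}∇f(y_{k+1}))‖ ≤ σ‖y_{k+1} − x̃_k‖ with σ ∈ [0,1), the Monteiro–Svaiter iteration satisfies Σ_{i=1}^k (A_i/λ_i)‖y_i − x̃_{i−1}‖² ≤ ‖x*‖²/(1 − σ²), where x* is a minimizer of f. -/

import Mathlib

open scoped RealInnerProductSpace

lemma grad_convex_ineq {d : ℕ} {f : EuclideanSpace ℝ (Fin d) → ℝ}
    (hconv : ConvexOn ℝ Set.univ f) (hdiff : Differentiable ℝ f)
    (w z : EuclideanSpace ℝ (Fin d)) :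
    f w + ⟪gradient f w, z - w⟫ ≤ f z := by
  set g : ℝ → ℝ := fun t => f (w + t • (z - w)) with hgdef
  have hgc : ConvexOn ℝ Set.univ g := by
    have h := hconv.comp_affineMap (AffineMap.lineMap w z : ℝ →ᵃ[ℝ] _)
    have heq : f ∘ (AffineMap.lineMap w z : ℝ →ᵃ[ℝ] _) = g := by
      funext t
      simp only [Function.comp_apply, g, AffineMap.lineMap_apply, vsub_eq_sub, vadd_eq_add]
      congr 1
      module
    rw [heq] at h
    simpa using h
  have hline : HasDerivAt (fun t : ℝ => w + t • (z - w)) (z - w) 0 := by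
    simpa using ((hasDerivAt_id (0:ℝ)).smul_const (z - w)).const_add w
  have hfd : HasFDerivAt f (fderiv ℝ f (w + (0:ℝ) • (z - w))) (w + (0:ℝ) • (z - w)) :=
    (hdiff _).hasFDerivAt
  have hderiv : HasDerivAt g (fderiv ℝ f w (z - w)) 0 := by
    have := hfd.comp_hasDerivAt 0 hline
    simpa [g, Function.comp_def] using this
  have hgrad : fderiv ℝ f w (z - w) = ⟪gradient f w, z - w⟫ := by
    have h1 : HasGradientAt f (gradient f w) w := (hdiff w).hasGradientAt
    have h2 := (hasGradientAt_iff_hasFDerivAt.mp h1).fderiv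
    rw [h2]
    simp [InnerProductSpace.toDual_apply_apply]
  rw [hgrad] at hderiv
  have := hgc.le_slope_of_hasDerivAt (Set.mem_univ (0:ℝ)) (Set.mem_univ (1:ℝ))
    one_pos hderiv
  have hs : slope g 0 1 = f z - f w := by
    simp [slope_def_field, g]
  rw [hs] at this
  linarith

/-- Monteiro–Svaiter framework with the refined condition with constant `σ ∈ [0,1)`:
`∑_{i=1}^k (A i / λ i) ‖y i - x̃ (i-1)‖² ≤ ‖x*‖² / (1 - σ²)`. -/
theorem monteiro_svaiter_refined (d : ℕ) (f : EuclideanSpace ℝ (Fin d) → ℝ)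
    (hconv : ConvexOn ℝ Set.univ f) (hdiff : Differentiable ℝ f)
    (xs : EuclideanSpace ℝ (Fin d)) (hxs : ∀ w, f xs ≤ f w)
    (σ : ℝ) (hσ0 : 0 ≤ σ) (hσ1 : σ < 1)
    (lam a A : ℕ → ℝ)
    (hlam : ∀ k, 1 ≤ k → 0 < lam k) (ha : ∀ k, 1 ≤ k → 0 < a k)
    (hA : ∀ k, A k = ∑ i ∈ Finset.Icc 1 k, a i)
    (hlamA : ∀ k, 1 ≤ k → lam k * A k = (a k) ^ 2)
    (y x xt : ℕ → EuclideanSpace ℝ (Fin d))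
    (hx : ∀ k, x k = -∑ i ∈ Finset.Icc 1 k, a i • gradient f (y i))
    (hxt : ∀ k, xt k = (a (k + 1) / A (k + 1)) • x k + (A k / A (k + 1)) • y k)
    (hMS : ∀ k, ‖y (k + 1) - (xt k - lam (k + 1) • gradient f (y (k + 1)))‖ ≤
      σ * ‖y (k + 1) - xt k‖) :
    ∀ k : ℕ, 1 ≤ k →
      ∑ i ∈ Finset.Icc 1 k, (A i / lam i) * ‖y i - xt (i - 1)‖ ^ 2 ≤
        ‖xs‖ ^ 2 / (1 - σ ^ 2) := by
  -- basic facts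
  have hApos : ∀ k, 1 ≤ k → 0 < A k := by
    intro k hk
    rw [hA k]
    apply Finset.sum_pos
    · intro i hi
      exact ha i (Finset.mem_Icc.mp hi).1
    · exact ⟨1, Finset.mem_Icc.mpr ⟨le_refl 1, hk⟩⟩
  have hAnn : ∀ k, 0 ≤ A k := by
    intro k
    rw [hA k]
    apply Finset.sum_nonneg
    intro i hi
    exact (ha i (Finset.mem_Icc.mp hi).1).le
  have hA0 : A 0 = 0 := by simp [hA 0]
  have hx0 : x 0 = 0 := by simp [hx 0]
  have hAsucc : ∀ k, A (k + 1) = A k + a (k + 1) := by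
    intro k
    rw [hA (k + 1), hA k, Finset.sum_Icc_succ_top (Nat.succ_le_succ (Nat.zero_le k))]
  have hxsucc : ∀ k, x (k + 1) = x k - a (k + 1) • gradient f (y (k + 1)) := by
    intro k
    rw [hx (k + 1), hx k, Finset.sum_Icc_succ_top (Nat.succ_le_succ (Nat.zero_le k))]
    abel
  -- potential
  set E : ℕ → ℝ := fun k => A k * (f (y k) - f xs) + ‖x k - xs‖ ^ 2 / 2 with hE
  have step : ∀ k : ℕ,
      E (k + 1) + (1 - σ ^ 2) * ((A (k + 1) / lam (k + 1)) * ‖y (k + 1) - xt k‖ ^ 2) / 2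
        ≤ E k := by
    intro k
    have hk1 : 1 ≤ k + 1 := Nat.succ_le_succ (Nat.zero_le k)
    set g := gradient f (y (k + 1)) with hgd
    set u := y (k + 1) - xt k with hud
    have hL : 0 < lam (k + 1) := hlam (k + 1) hk1
    have hA1 : 0 < A (k + 1) := hApos (k + 1) hk1
    have ha1 : 0 < a (k + 1) := ha (k + 1) hk1
    -- MS condition squared
    have hvec : y (k + 1) - (xt k - lam (k + 1) • g) = u + lam (k + 1) • g := by
      rw [hud]; module
    have hMS' : ‖u + lam (k + 1) • g‖ ≤ σ * ‖u‖ := by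
      rw [← hvec]; exact hMS k
    have hmssq : ‖u + lam (k + 1) • g‖ ^ 2 ≤ σ ^ 2 * ‖u‖ ^ 2 := by
      have h1 := pow_le_pow_left₀ (norm_nonneg _) hMS' 2
      calc ‖u + lam (k + 1) • g‖ ^ 2 ≤ (σ * ‖u‖) ^ 2 := h1
        _ = σ ^ 2 * ‖u‖ ^ 2 := by ring
    have hexp : ‖u + lam (k + 1) • g‖ ^ 2
        = ‖u‖ ^ 2 + 2 * (lam (k + 1) * ⟪g, u⟫) + lam (k + 1) ^ 2 * ‖g‖ ^ 2 := by
      rw [norm_add_sq_real, real_inner_smul_right, real_inner_comm, norm_smul]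
      rw [Real.norm_eq_abs, mul_pow, sq_abs]
    -- key inequality
    have hF4 : lam (k + 1) * ⟪g, u⟫ + lam (k + 1) ^ 2 / 2 * ‖g‖ ^ 2
        ≤ (σ ^ 2 - 1) * ‖u‖ ^ 2 / 2 := by linarith
    have hdivnn : 0 ≤ A (k + 1) / lam (k + 1) := (div_pos hA1 hL).le
    have hmul := mul_le_mul_of_nonneg_left hF4 hdivnn
    have ha2 : (a (k + 1)) ^ 2 = lam (k + 1) * A (k + 1) := (hlamA (k + 1) hk1).symm
    have e1 : (A (k + 1) / lam (k + 1)) *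
        (lam (k + 1) * ⟪g, u⟫ + lam (k + 1) ^ 2 / 2 * ‖g‖ ^ 2)
        = A (k + 1) * ⟪g, u⟫ + (a (k + 1)) ^ 2 / 2 * ‖g‖ ^ 2 := by
      rw [ha2]; field_simp
    have key : A (k + 1) * ⟪g, u⟫ + (a (k + 1)) ^ 2 / 2 * ‖g‖ ^ 2
        ≤ -((1 - σ ^ 2) * ((A (k + 1) / lam (k + 1)) * ‖u‖ ^ 2) / 2) := by
      rw [← e1]
      calc (A (k + 1) / lam (k + 1)) *
          (lam (k + 1) * ⟪g, u⟫ + lam (k + 1) ^ 2 / 2 * ‖g‖ ^ 2)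
          ≤ (A (k + 1) / lam (k + 1)) * ((σ ^ 2 - 1) * ‖u‖ ^ 2 / 2) := hmul
        _ = -((1 - σ ^ 2) * ((A (k + 1) / lam (k + 1)) * ‖u‖ ^ 2) / 2) := by ring
    -- quadratic expansion of the x-update
    have hF1 : ‖x (k + 1) - xs‖ ^ 2 = ‖x k - xs‖ ^ 2
        - 2 * (a (k + 1) * (⟪g, x k⟫ - ⟪g, xs⟫)) + (a (k + 1)) ^ 2 * ‖g‖ ^ 2 := by
      have : x (k + 1) - xs = (x k - xs) - a (k + 1) • g := by
        rw [hxsucc k]; module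
      rw [this, norm_sub_sq_real, real_inner_smul_right, norm_smul, Real.norm_eq_abs,
        mul_pow, sq_abs]
      rw [real_inner_comm, inner_sub_right]
    -- convexity inequalities
    have hconv1 : f (y (k + 1)) + (⟪g, xs⟫ - ⟪g, y (k + 1)⟫) ≤ f xs := by
      have := grad_convex_ineq hconv hdiff (y (k + 1)) xs
      rwa [inner_sub_right] at this
    have hconv2 : f (y (k + 1)) + (⟪g, y k⟫ - ⟪g, y (k + 1)⟫) ≤ f (y k) := by
      have := grad_convex_ineq hconv hdiff (y (k + 1)) (y k)
      rwa [inner_sub_right] at this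
    have hconv1' := mul_le_mul_of_nonneg_left hconv1 ha1.le
    have hconv2' := mul_le_mul_of_nonneg_left hconv2 (hAnn k)
    -- xt relation
    have hxtk : A (k + 1) • xt k = a (k + 1) • x k + A k • y k := by
      rw [hxt k, smul_add, smul_smul, smul_smul,
        mul_div_cancel₀ _ (ne_of_gt hA1), mul_div_cancel₀ _ (ne_of_gt hA1)]
    have hF5 : A (k + 1) * ⟪g, u⟫
        = A (k + 1) * ⟪g, y (k + 1)⟫ - (a (k + 1) * ⟪g, x k⟫ + A k * ⟪g, y k⟫) := by
      have hu2 : A (k + 1) • u = A (k + 1) • y (k + 1)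
          - (a (k + 1) • x k + A k • y k) := by
        rw [← hxtk, hud]; module
      calc A (k + 1) * ⟪g, u⟫ = ⟪g, A (k + 1) • u⟫ := (real_inner_smul_right g u _).symm
        _ = ⟪g, A (k + 1) • y (k + 1)⟫ - (⟪g, a (k + 1) • x k⟫ + ⟪g, A k • y k⟫) := by
            rw [hu2, inner_sub_right, inner_add_right]
        _ = A (k + 1) * ⟪g, y (k + 1)⟫
            - (a (k + 1) * ⟪g, x k⟫ + A k * ⟪g, y k⟫) := by
            rw [real_inner_smul_right, real_inner_smul_right, real_inner_smul_right]
    -- split identities from A (k+1) = A k + a (k+1)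
    have hid1 : A (k + 1) * f (y (k + 1))
        = A k * f (y (k + 1)) + a (k + 1) * f (y (k + 1)) := by rw [hAsucc k]; ring
    have hid2 : A (k + 1) * f xs = A k * f xs + a (k + 1) * f xs := by
      rw [hAsucc k]; ring
    have hid3 : A (k + 1) * ⟪g, y (k + 1)⟫
        = A k * ⟪g, y (k + 1)⟫ + a (k + 1) * ⟪g, y (k + 1)⟫ := by rw [hAsucc k]; ring
    simp only [hE]
    linarith [hF1, hF5, key, hconv1', hconv2', hid1, hid2, hid3]
  -- summed potential bound
  have main : ∀ k : ℕ, E k + (1 - σ ^ 2) / 2 *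
      (∑ i ∈ Finset.Icc 1 k, (A i / lam i) * ‖y i - xt (i - 1)‖ ^ 2) ≤ ‖xs‖ ^ 2 / 2 := by
    intro k
    induction k with
    | zero =>
      simp [hE, hA0, hx0]
    | succ n ih =>
      rw [Finset.sum_Icc_succ_top (Nat.succ_le_succ (Nat.zero_le n))]
      have hstep := step n
      simp only [Nat.add_sub_cancel]
      linarith
  intro k hk
  have hσsq : σ ^ 2 < 1 := by nlinarith
  have hEnn : 0 ≤ E k := by
    have h1 : 0 ≤ f (y k) - f xs := by linarith [hxs (y k)]
    have h2 : 0 ≤ ‖x k - xs‖ ^ 2 := sq_nonneg _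
    have := mul_nonneg (hAnn k) h1
    simp only [hE]
    linarith
  have hm := main k
  set S := ∑ i ∈ Finset.Icc 1 k, (A i / lam i) * ‖y i - xt (i - 1)‖ ^ 2 with hS
  clear_value S
  have hEk : (0:ℝ) ≤ E k := hEnn
  have hm' : E k + (1 - σ ^ 2) / 2 * S ≤ ‖xs‖ ^ 2 / 2 := hm
  generalize hq : E k = q at hEk hm'
  rw [le_div_iff₀ (by linarith : (0:ℝ) < 1 - σ ^ 2)]
  nlinarith [hm', hEk]
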